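/- For every g ∈ F and every x ∈ [ω]^ω, the measures μ^{g·x} and μ^x are equivalent, i.e., mutually absolutely continuous. -/

import Mathlib

open MeasureTheory Filter Set
open scoped ENNReal
open scoped symmDiff

noncomputable section

/-- `fEnum x` is the increasing enumeration `f_x : ω → ω` of the set `x ∈ [ω]^ω`. -/
def fEnum (x : Set ℕ) : ℕ → ℕ := Nat.nth (· ∈ x)

/-- The sequence `α^x ∈ [1/4,3/4]^ω` attached to `x ∈ [ω]^ω`:
`α^x_n = 1/4 + 1/(2·√(f_x⁻¹(n)+1))` if `n ∈ x` and `α^x_n = 1/4` otherwise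
(for `n ∈ x`, `f_x⁻¹(n)` is the number of elements of `x` below `n`). -/
noncomputable def alphaSeq (x : Set ℕ) (n : ℕ) : ℝ :=
  haveI := Classical.decPred (· ∈ x)
  if n ∈ x then 1/4 + 1/(2 * Real.sqrt ((Nat.count (· ∈ x) n : ℝ) + 1)) else 1/4

/-- `ρ(x,y) = Σ_n (α^x_n - α^y_n)² ∈ [0,∞]`. -/
noncomputable def rho (x y : Set ℕ) : ℝ≥0∞ :=
  ∑' n : ℕ, ENNReal.ofReal ((alphaSeq x n - alphaSeq y n)^2)

/-- `F = {g ∈ [ω]^ω : ρ(g,ω) < ∞}`. -/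
def Fset : Set (Set ℕ) := {g | g.Infinite ∧ rho g Set.univ < ⊤}

/-- The monoid operation `x · y = (f_y ∘ f_x)[ω]`. -/
def dotOp (x y : Set ℕ) : Set ℕ := Set.range (fEnum y ∘ fEnum x)

/-- `IsKakutaniProduct x μ` says that `μ` is the product measure
`μ^x = ∏_n (α^x_n δ_0 + (1 - α^x_n) δ_1)` on Cantor space `2^ω = ℕ → Bool`
(identifying `0` with `false` and `1` with `true`), i.e. `μ` is the Borel
probability measure giving each finite cylinder the corresponding product of
the coordinate weights.  These conditions determine `μ^x` uniquely. -/
def IsKakutaniProduct (x : Set ℕ) (μ : Measure (ℕ → Bool)) : Prop :=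
  IsProbabilityMeasure μ ∧
    ∀ (s : Finset ℕ) (f : ℕ → Bool),
      μ {g | ∀ n ∈ s, g n = f n} =
        ∏ n ∈ s, (if f n = false then ENNReal.ofReal (alphaSeq x n)
                  else ENNReal.ofReal (1 - alphaSeq x n))

/-- The subset of `ℕ` coded by a point of Cantor space. -/
def toSet (f : ℕ → Bool) : Set ℕ := {n | f n = true}

local instance (x : Set ℕ) : DecidablePred (· ∈ x) := Classical.decPred _

-- basic facts
lemma setOf_mem_inf {x : Set ℕ} (hx : x.Infinite) : (setOf (· ∈ x)).Infinite := by
  exact hx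

lemma fEnum_mem {x : Set ℕ} (hx : x.Infinite) (k : ℕ) : fEnum x k ∈ x :=
  Nat.nth_mem_of_infinite (setOf_mem_inf hx) k

lemma fEnum_inj {x : Set ℕ} (hx : x.Infinite) : Function.Injective (fEnum x) :=
  Nat.nth_injective (setOf_mem_inf hx)

lemma fEnum_strictMono {x : Set ℕ} (hx : x.Infinite) : StrictMono (fEnum x) :=
  Nat.nth_strictMono (setOf_mem_inf hx)

lemma range_fEnum {x : Set ℕ} (hx : x.Infinite) : Set.range (fEnum x) = x := by
  simpa [fEnum] using Nat.range_nth_of_infinite (setOf_mem_inf hx)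

lemma count_fEnum {x : Set ℕ} (hx : x.Infinite) (k : ℕ) :
    Nat.count (· ∈ x) (fEnum x k) = k := by
  have := Nat.count_nth_of_infinite (setOf_mem_inf hx) k
  convert this using 2
  rfl

lemma fEnum_count {x : Set ℕ} {n : ℕ} (hn : n ∈ x) :
    fEnum x (Nat.count (· ∈ x) n) = n := by
  have := Nat.nth_count (p := (· ∈ x)) hn
  convert this using 2
  rfl

lemma count_univ (n : ℕ) : Nat.count (· ∈ (Set.univ : Set ℕ)) n = n := by
  induction n with
  | zero => simp
  | succ n ih => rw [Nat.count_succ]; simp [ih]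

lemma dotOp_infinite {g x : Set ℕ} (hg : g.Infinite) (hx : x.Infinite) :
    (dotOp g x).Infinite :=
  Set.infinite_range_of_injective ((fEnum_inj hx).comp (fEnum_inj hg))

lemma dotOp_subset {g x : Set ℕ} (hx : x.Infinite) : dotOp g x ⊆ x := by
  rintro _ ⟨i, rfl⟩
  exact fEnum_mem hx _

lemma fEnum_mem_dotOp {g x : Set ℕ} {k : ℕ} (hk : k ∈ g) :
    fEnum x k ∈ dotOp g x :=
  ⟨Nat.count (· ∈ g) k, by
    simp only [Function.comp_apply]
    congr 1
    exact fEnum_count hk⟩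

lemma fEnum_not_mem_dotOp {g x : Set ℕ} (hg : g.Infinite) (hx : x.Infinite) {k : ℕ}
    (hk : k ∉ g) : fEnum x k ∉ dotOp g x := by
  rintro ⟨i, hi⟩
  simp only [Function.comp_apply] at hi
  have := fEnum_inj hx hi
  exact hk (this ▸ fEnum_mem hg i)

/-- the key counting identity. -/
lemma count_dotOp {g x : Set ℕ} (hg : g.Infinite) (hx : x.Infinite) {k : ℕ} (hk : k ∈ g) :
    Nat.count (· ∈ dotOp g x) (fEnum x k) = Nat.count (· ∈ g) k := by
  rw [Nat.count_eq_card_filter_range, Nat.count_eq_card_filter_range]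
  refine Finset.card_bij' (fun m _ => Nat.count (· ∈ x) m) (fun j _ => fEnum x j) ?_ ?_ ?_ ?_
  · -- forward: m < fEnum x k, m ∈ dotOp g x ↦ count x m ∈ filter (∈ g) (range k)
    intro m hm
    simp only [Finset.mem_filter, Finset.mem_range] at hm ⊢
    obtain ⟨hmlt, hmy⟩ := hm
    obtain ⟨i, hi⟩ := hmy
    simp only [Function.comp_apply] at hi
    have hmx : m ∈ x := dotOp_subset hx ⟨i, hi⟩
    constructor
    · have h1 : fEnum x (Nat.count (· ∈ x) m) = m := fEnum_count hmx
      by_contra hcon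
      push_neg at hcon
      have := (fEnum_strictMono hx).le_iff_le.2 hcon
      rw [h1] at this
      omega
    · rw [← hi, count_fEnum hx]
      exact fEnum_mem hg i
  · -- backward
    intro j hj
    simp only [Finset.mem_filter, Finset.mem_range] at hj ⊢
    exact ⟨(fEnum_strictMono hx) hj.1, fEnum_mem_dotOp hj.2⟩
  · intro m hm
    simp only [Finset.mem_filter, Finset.mem_range] at hm
    exact fEnum_count (dotOp_subset hx hm.2)
  · intro j hj
    exact count_fEnum hx j

lemma alphaSeq_not_mem {x : Set ℕ} {n : ℕ} (hn : n ∉ x) : alphaSeq x n = 1/4 := by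
  rw [alphaSeq]
  simp [hn]

lemma alphaSeq_mem' {x : Set ℕ} {n : ℕ} (hn : n ∈ x) :
    alphaSeq x n = 1/4 + 1/(2 * Real.sqrt ((Nat.count (· ∈ x) n : ℝ) + 1)) := by
  rw [alphaSeq]
  exact if_pos hn

/-- the key pointwise identity. -/
lemma diff_eq {g x : Set ℕ} (hg : g.Infinite) (hx : x.Infinite) (k : ℕ) :
    alphaSeq (dotOp g x) (fEnum x k) - alphaSeq x (fEnum x k) =
      alphaSeq g k - alphaSeq Set.univ k := by
  have hxk : alphaSeq x (fEnum x k) = 1/4 + 1/(2 * Real.sqrt ((k : ℝ) + 1)) := by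
    rw [alphaSeq_mem' (fEnum_mem hx k), count_fEnum hx k]
  have huk : alphaSeq Set.univ k = 1/4 + 1/(2 * Real.sqrt ((k : ℝ) + 1)) := by
    rw [alphaSeq_mem' (Set.mem_univ k), count_univ k]
  by_cases hk : k ∈ g
  · have h1 : alphaSeq (dotOp g x) (fEnum x k) =
        1/4 + 1/(2 * Real.sqrt ((Nat.count (· ∈ g) k : ℝ) + 1)) := by
      rw [alphaSeq_mem' (fEnum_mem_dotOp hk), count_dotOp hg hx hk]
    have h2 : alphaSeq g k = 1/4 + 1/(2 * Real.sqrt ((Nat.count (· ∈ g) k : ℝ) + 1)) :=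
      alphaSeq_mem' hk
    rw [h1, h2, hxk, huk]
  · rw [alphaSeq_not_mem (fEnum_not_mem_dotOp hg hx hk), alphaSeq_not_mem hk, hxk, huk]

lemma diff_zero {g x : Set ℕ} (hx : x.Infinite) {n : ℕ} (hn : n ∉ x) :
    alphaSeq (dotOp g x) n - alphaSeq x n = 0 := by
  rw [alphaSeq_not_mem (fun h => hn (dotOp_subset hx h)), alphaSeq_not_mem hn, sub_self]

/-- the total sum identity. -/
lemma tsum_diff_eq {g x : Set ℕ} (hg : g.Infinite) (hx : x.Infinite) :
    (∑' n : ℕ, ENNReal.ofReal ((alphaSeq (dotOp g x) n - alphaSeq x n)^2)) =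
      rho g Set.univ := by
  set D : ℕ → ℝ≥0∞ := fun n => ENNReal.ofReal ((alphaSeq (dotOp g x) n - alphaSeq x n)^2)
    with hD
  have hsupp : Function.support D ⊆ Set.range (fEnum x) := by
    intro n hn
    rw [range_fEnum hx]
    by_contra hnx
    apply hn
    rw [hD]
    simp only
    rw [diff_zero hx hnx]
    simp
  have h1 : (∑' n : ℕ, D n) = ∑' (m : Set.range (fEnum x)), D ↑m :=
    (tsum_subtype_eq_of_support_subset hsupp).symm
  have h2 : (∑' (m : Set.range (fEnum x)), D ↑m) = ∑' k : ℕ, D (fEnum x k) :=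
    ((Equiv.ofInjective (fEnum x) (fEnum_inj hx)).tsum_eq
      (fun m : Set.range (fEnum x) => D ↑m)).symm
  rw [h1, h2, rho]
  refine tsum_congr fun k => ?_
  rw [hD]
  simp only
  rw [diff_eq hg hx k]

/-- weight of coordinate `n` with value `v` for parameter sequence `γ`. -/
def wgt (γ : ℕ → ℝ) (n : ℕ) (v : Bool) : ℝ := if v then 1 - γ n else γ n

lemma wgt_pos {γ : ℕ → ℝ} (hγ : ∀ n, 1/4 ≤ γ n ∧ γ n ≤ 3/4) (n : ℕ) (v : Bool) :
    (1:ℝ)/4 ≤ wgt γ n v := by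
  obtain ⟨h1, h2⟩ := hγ n
  cases v <;> simp [wgt] <;> linarith

lemma ratio_bound {a b : ℝ} (ha1 : 1/4 ≤ a) (ha2 : a ≤ 3/4) (hb1 : 1/4 ≤ b) (hb2 : b ≤ 3/4) :
    b^2/a + (1-b)^2/(1-a) ≤ 1 + 6*(b-a)^2 := by
  have h0 : (0:ℝ) < a := by linarith
  have h1 : (0:ℝ) < 1 - a := by linarith
  rw [div_add_div _ _ (ne_of_gt h0) (ne_of_gt h1), div_le_iff₀ (by positivity)]
  have h3 : (0:ℝ) ≤ (a - 1/4) * (3/4 - a) := mul_nonneg (by linarith) (by linarith)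
  have h2 : (0:ℝ) ≤ 6*a*(1-a) - 1 := by nlinarith
  nlinarith [mul_nonneg (sq_nonneg (b-a)) h2]

/-- extension of a partial boolean assignment on `s` by `false`. -/
def fext (s : Finset ℕ) (c : {x // x ∈ s} → Bool) : ℕ → Bool :=
  fun n => if h : n ∈ s then c ⟨n, h⟩ else false

/-- basic cylinder determined by the assignment `c` on `s`. -/
def Bs (s : Finset ℕ) (c : {x // x ∈ s} → Bool) : Set (ℕ → Bool) :=
  {g | ∀ n ∈ s, g n = fext s c n}

/-- product weight of the assignment `c` on `s`. -/
def Pw (γ : ℕ → ℝ) (s : Finset ℕ) (c : {x // x ∈ s} → Bool) : ℝ :=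
  ∏ i : {x // x ∈ s}, wgt γ ↑i (c i)

lemma Pw_pos {γ : ℕ → ℝ} (hγ : ∀ n, 1/4 ≤ γ n ∧ γ n ≤ 3/4) (s : Finset ℕ)
    (c : {x // x ∈ s} → Bool) : 0 < Pw γ s c :=
  Finset.prod_pos fun i _ => lt_of_lt_of_le (by norm_num) (wgt_pos hγ _ _)

lemma Bs_eq (s : Finset ℕ) (c : {x // x ∈ s} → Bool) :
    Bs s c = (fun (g : ℕ → Bool) (i : {x // x ∈ s}) => g ↑i) ⁻¹' {c} := by
  ext g
  simp only [Bs, mem_setOf_eq, mem_preimage, mem_singleton_iff, funext_iff]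
  constructor
  · intro h i
    rw [h ↑i i.2]
    simp [fext, i.2]
  · intro h n hn
    rw [show g n = c ⟨n, hn⟩ from h ⟨n, hn⟩]
    simp [fext, hn]

lemma Bs_measurable (s : Finset ℕ) (c : {x // x ∈ s} → Bool) : MeasurableSet (Bs s c) := by
  rw [Bs_eq]
  exact (measurable_pi_lambda _ fun i => measurable_pi_apply _) (measurableSet_singleton c)

lemma cylinder_eq_biUnion (s : Finset ℕ) (S : Set ({x // x ∈ s} → Bool)) :
    cylinder s S = ⋃ c ∈ (Set.toFinite S).toFinset, Bs s c := by
  ext g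
  simp only [mem_cylinder, mem_iUnion, Set.Finite.mem_toFinset, exists_prop]
  constructor
  · intro h
    refine ⟨s.restrict g, h, fun n hn => ?_⟩
    simp [fext, hn, Finset.restrict]
  · rintro ⟨c, hcS, hgc⟩
    have : s.restrict g = c := by
      funext i
      rw [Finset.restrict, hgc ↑i i.2]
      simp [fext, i.2]
    rw [this]
    exact hcS

lemma meas_cylinder {γ : ℕ → ℝ} (hγ : ∀ n, 1/4 ≤ γ n ∧ γ n ≤ 3/4)
    (μ : Measure (ℕ → Bool))
    (hμ : ∀ (s : Finset ℕ) (f : ℕ → Bool), μ {g | ∀ n ∈ s, g n = f n} =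
      ∏ n ∈ s, (if f n = false then ENNReal.ofReal (γ n) else ENNReal.ofReal (1 - γ n)))
    (s : Finset ℕ) (S : Set ({x // x ∈ s} → Bool)) :
    μ (cylinder s S) =
      ENNReal.ofReal (∑ c ∈ (Set.toFinite S).toFinset, Pw γ s c) := by
  have hbasic : ∀ c : {x // x ∈ s} → Bool, μ (Bs s c) = ENNReal.ofReal (Pw γ s c) := by
    intro c
    have h0 : μ (Bs s c) = ∏ n ∈ s, (if fext s c n = false then ENNReal.ofReal (γ n)
        else ENNReal.ofReal (1 - γ n)) := hμ s (fext s c)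
    rw [h0]
    have h1 : ∀ n ∈ s, (if fext s c n = false then ENNReal.ofReal (γ n)
        else ENNReal.ofReal (1 - γ n)) = ENNReal.ofReal (wgt γ n (fext s c n)) := by
      intro n _
      cases hfn : fext s c n <;> simp [wgt, hfn]
    rw [Finset.prod_congr rfl h1,
      ← ENNReal.ofReal_prod_of_nonneg (fun n _ => le_trans (by norm_num) (wgt_pos hγ n _))]
    congr 1
    rw [Pw, ← Finset.prod_coe_sort s (fun n => wgt γ n (fext s c n))]
    exact Finset.prod_congr rfl fun i _ => by simp [fext, i.2]
  rw [cylinder_eq_biUnion,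
    measure_biUnion_finset ?disj (fun c _ => Bs_measurable s c),
    ENNReal.ofReal_sum_of_nonneg (fun c _ => le_of_lt (Pw_pos hγ s c))]
  · exact Finset.sum_congr rfl fun c _ => hbasic c
  case disj =>
    intro c _ d _ hcd
    simp only [Function.onFun]
    rw [Bs_eq, Bs_eq]
    exact Disjoint.preimage _ (disjoint_singleton.2 hcd)

lemma key_real {a b : ℕ → ℝ}
    (ha : ∀ n, 1/4 ≤ a n ∧ a n ≤ 3/4) (hb : ∀ n, 1/4 ≤ b n ∧ b n ≤ 3/4)
    (hsum : Summable (fun n => (b n - a n)^2))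
    (s : Finset ℕ) (T : Finset ({x // x ∈ s} → Bool)) :
    (∑ c ∈ T, Pw b s c)^2 ≤
      Real.exp (6 * ∑' n, (b n - a n)^2) * (∑ c ∈ T, Pw a s c) := by
  have hPa : ∀ c, 0 < Pw a s c := Pw_pos ha s
  have hPb : ∀ c, 0 < Pw b s c := Pw_pos hb s
  have cs := Finset.sum_sq_le_sum_mul_sum_of_sq_eq_mul T
    (r := fun c => Pw b s c) (f := fun c => (Pw b s c)^2 / Pw a s c) (g := fun c => Pw a s c)
    (fun c _ => div_nonneg (sq_nonneg _) (hPa c).le) (fun c _ => (hPa c).le)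
    (fun c _ => (div_mul_cancel₀ _ (hPa c).ne').symm)
  refine cs.trans (mul_le_mul_of_nonneg_right ?_ (Finset.sum_nonneg fun c _ => (hPa c).le))
  -- bound the chi-square sum
  have hsub : ∑ c ∈ T, (Pw b s c)^2 / Pw a s c ≤
      ∑ c : {x // x ∈ s} → Bool, (Pw b s c)^2 / Pw a s c :=
    Finset.sum_le_sum_of_subset_of_nonneg (Finset.subset_univ T)
      (fun c _ _ => div_nonneg (sq_nonneg _) (hPa c).le)
  refine hsub.trans ?_
  have hfac : ∀ c : {x // x ∈ s} → Bool,
      (Pw b s c)^2 / Pw a s c = ∏ i : {x // x ∈ s}, (wgt b ↑i (c i))^2 / wgt a ↑i (c i) := by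
    intro c
    rw [Pw, Pw, ← Finset.prod_pow, ← Finset.prod_div_distrib]
  simp_rw [hfac]
  have hps := Finset.prod_univ_sum (fun _ : {x // x ∈ s} => (Finset.univ : Finset Bool))
    (fun i v => (wgt b ↑i v)^2 / wgt a ↑i v)
  rw [Fintype.piFinset_univ] at hps
  rw [← hps]
  have hfactor : ∀ i : {x // x ∈ s},
      (∑ v : Bool, (wgt b ↑i v)^2 / wgt a ↑i v) ≤ Real.exp (6 * (b ↑i - a ↑i)^2) := by
    intro i
    have h1 : (∑ v : Bool, (wgt b ↑i v)^2 / wgt a ↑i v) =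
        (b ↑i)^2 / a ↑i + (1 - b ↑i)^2 / (1 - a ↑i) := by
      rw [Fintype.sum_bool]
      simp [wgt]
      ring
    rw [h1]
    refine (ratio_bound (ha ↑i).1 (ha ↑i).2 (hb ↑i).1 (hb ↑i).2).trans ?_
    have := Real.add_one_le_exp (6*(b ↑i - a ↑i)^2)
    linarith
  calc ∏ i : {x // x ∈ s}, (∑ v : Bool, (wgt b ↑i v)^2 / wgt a ↑i v)
      ≤ ∏ i : {x // x ∈ s}, Real.exp (6 * (b ↑i - a ↑i)^2) := by
        refine Finset.prod_le_prod (fun i _ => ?_) (fun i _ => hfactor i)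
        refine Finset.sum_nonneg fun v _ => ?_
        have := wgt_pos ha (↑i) v
        have := wgt_pos hb (↑i) v
        positivity
    _ = Real.exp (∑ i : {x // x ∈ s}, 6 * (b ↑i - a ↑i)^2) := (Real.exp_sum _ _).symm
    _ ≤ Real.exp (6 * ∑' n, (b n - a n)^2) := by
        apply Real.exp_le_exp.2
        rw [Finset.sum_coe_sort s (fun n => 6*(b n - a n)^2), ← Finset.mul_sum]
        exact mul_le_mul_of_nonneg_left
          (Summable.sum_le_tsum s (fun n _ => sq_nonneg _) hsum) (by norm_num)

theorem kakutani_ac (a b : ℕ → ℝ)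
    (ha : ∀ n, 1/4 ≤ a n ∧ a n ≤ 3/4) (hb : ∀ n, 1/4 ≤ b n ∧ b n ≤ 3/4)
    (hsum : Summable (fun n => (b n - a n)^2))
    (μ ν : Measure (ℕ → Bool)) [IsProbabilityMeasure μ] [IsProbabilityMeasure ν]
    (hμ : ∀ (s : Finset ℕ) (f : ℕ → Bool), μ {g | ∀ n ∈ s, g n = f n} =
      ∏ n ∈ s, (if f n = false then ENNReal.ofReal (a n) else ENNReal.ofReal (1 - a n)))
    (hν : ∀ (s : Finset ℕ) (f : ℕ → Bool), ν {g | ∀ n ∈ s, g n = f n} =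
      ∏ n ∈ s, (if f n = false then ENNReal.ofReal (b n) else ENNReal.ofReal (1 - b n))) :
    ν ≪ μ := by
  set K : ℝ := Real.exp (6 * ∑' n, (b n - a n)^2) with hK
  have hK0 : 0 < K := Real.exp_pos _
  -- squared bound on cylinder sets
  have hcylbd : ∀ t ∈ measurableCylinders (fun _ : ℕ => Bool),
      (ν t)^2 ≤ ENNReal.ofReal K * μ t := by
    intro t ht
    obtain ⟨s, S, -, rfl⟩ := (mem_measurableCylinders t).1 ht
    rw [meas_cylinder ha μ hμ s S, meas_cylinder hb ν hν s S,
      ← ENNReal.ofReal_pow (Finset.sum_nonneg fun c _ => (Pw_pos hb s c).le),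
      ← ENNReal.ofReal_mul hK0.le]
    exact ENNReal.ofReal_le_ofReal (key_real ha hb hsum s _)
  -- approximation of arbitrary measurable sets by cylinders
  have halg : IsSetAlgebra (measurableCylinders (fun _ : ℕ => Bool)) :=
    ⟨empty_mem_measurableCylinders _, fun _ hs => compl_mem_measurableCylinders hs,
      fun _ _ hs ht => union_mem_measurableCylinders hs ht⟩
  have hdense : (μ + ν).MeasureDense (measurableCylinders (fun _ : ℕ => Bool)) :=
    Measure.MeasureDense.of_generateFrom_isSetAlgebra_finite (μ + ν) halg
      generateFrom_measurableCylinders.symm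
  refine Measure.AbsolutelyContinuous.mk fun A hA hμA => ?_
  -- for each n, approximate A within 1/(n+1)
  have hbound : ∀ n : ℕ,
      ν A ≤ ENNReal.ofReal (Real.sqrt (K * (1/(n+1))) + 1/(n+1)) := by
    intro n
    have hεpos : (0:ℝ) < 1/(n+1) := by positivity
    obtain ⟨B, hBmem, hBapprox⟩ := hdense.approx A hA (measure_ne_top _ _) (1/(n+1)) hεpos
    have hμAB : μ (A ∆ B) ≤ ENNReal.ofReal (1/(n+1)) := by
      refine le_trans ?_ hBapprox.le
      simp [Measure.add_apply]
    have hνAB : ν (A ∆ B) ≤ ENNReal.ofReal (1/(n+1)) := by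
      refine le_trans ?_ hBapprox.le
      simp [Measure.add_apply]
    have hμB : μ B ≤ ENNReal.ofReal (1/(n+1)) := by
      have hsub : B ⊆ A ∪ A ∆ B := by
        intro z hz
        by_cases hzA : z ∈ A
        · exact Or.inl hzA
        · exact Or.inr (Or.inr ⟨hz, hzA⟩)
      calc μ B ≤ μ (A ∪ A ∆ B) := measure_mono hsub
        _ ≤ μ A + μ (A ∆ B) := measure_union_le _ _
        _ = μ (A ∆ B) := by rw [hμA, zero_add]
        _ ≤ _ := hμAB
    have hνB2 : (ν B)^2 ≤ ENNReal.ofReal (K * (1/(n+1))) := by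
      calc (ν B)^2 ≤ ENNReal.ofReal K * μ B := hcylbd B hBmem
        _ ≤ ENNReal.ofReal K * ENNReal.ofReal (1/(n+1)) := by gcongr
        _ = ENNReal.ofReal (K * (1/(n+1))) := (ENNReal.ofReal_mul hK0.le).symm
    have hνB : ν B ≤ ENNReal.ofReal (Real.sqrt (K * (1/(n+1)))) := by
      by_contra hcon
      push_neg at hcon
      have hsq : (ENNReal.ofReal (Real.sqrt (K * (1/(n+1)))))^2 < (ν B)^2 :=
        ENNReal.pow_lt_pow_left two_ne_zero hcon
      rw [← ENNReal.ofReal_pow (Real.sqrt_nonneg _), sq,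
        Real.mul_self_sqrt (by positivity)] at hsq
      exact absurd hνB2 (not_le.2 hsq)
    have hsubA : A ⊆ B ∪ A ∆ B := by
      intro z hz
      by_cases hzB : z ∈ B
      · exact Or.inl hzB
      · exact Or.inr (Or.inl ⟨hz, hzB⟩)
    calc ν A ≤ ν (B ∪ A ∆ B) := measure_mono hsubA
      _ ≤ ν B + ν (A ∆ B) := measure_union_le _ _
      _ ≤ ENNReal.ofReal (Real.sqrt (K * (1/(n+1)))) + ENNReal.ofReal (1/(n+1)) := by
          exact add_le_add hνB hνAB
      _ = _ := by rw [← ENNReal.ofReal_add (Real.sqrt_nonneg _) (by positivity)]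
  -- the bound tends to 0
  have htend : Tendsto (fun n : ℕ => ENNReal.ofReal (Real.sqrt (K * (1/(n+1))) + 1/(n+1)))
      atTop (nhds 0) := by
    have h1 : Tendsto (fun n : ℕ => 1/((n:ℝ)+1)) atTop (nhds 0) :=
      tendsto_one_div_add_atTop_nhds_zero_nat
    have hcont : Continuous (fun ε : ℝ => Real.sqrt (K * ε) + ε) :=
      (Real.continuous_sqrt.comp (continuous_const.mul continuous_id)).add continuous_id
    have h2 : Tendsto (fun n : ℕ => Real.sqrt (K * (1/(n+1))) + 1/(n+1)) atTop
        (nhds (Real.sqrt (K * 0) + 0)) := (hcont.tendsto 0).comp h1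
    rw [mul_zero, Real.sqrt_zero, add_zero] at h2
    simpa using ENNReal.tendsto_ofReal h2
  have := ge_of_tendsto' htend hbound
  exact le_antisymm this zero_le

/-- For every `g ∈ F` and every `x ∈ [ω]^ω`, the measures `μ^{g·x}` and `μ^x`
are equivalent, i.e. mutually absolutely continuous. -/
theorem mu_dotOp_equiv (μ : Set ℕ → Measure (ℕ → Bool))
    (hμ : ∀ x : Set ℕ, IsKakutaniProduct x (μ x)) :
    ∀ g ∈ Fset, ∀ x : Set ℕ, x.Infinite →
      μ (dotOp g x) ≪ μ x ∧ μ x ≪ μ (dotOp g x) := by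
  rintro g ⟨hg, hρ⟩ x hx
  obtain ⟨hP1, hcyl1⟩ := hμ (dotOp g x)
  obtain ⟨hP2, hcyl2⟩ := hμ x
  have halpha : ∀ (z : Set ℕ) (n : ℕ), 1/4 ≤ alphaSeq z n ∧ alphaSeq z n ≤ 3/4 := by
    intro z n
    rw [alphaSeq]
    split_ifs with h
    · have hc : (0:ℝ) ≤ (Nat.count (· ∈ z) n : ℝ) := Nat.cast_nonneg _
      have h1 : 1 ≤ Real.sqrt ((Nat.count (· ∈ z) n : ℝ) + 1) := by
        have := Real.sqrt_le_sqrt (show (1:ℝ) ≤ (Nat.count (· ∈ z) n : ℝ) + 1 by linarith)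
        rwa [Real.sqrt_one] at this
      have h2 : (0:ℝ) < Real.sqrt ((Nat.count (· ∈ z) n : ℝ) + 1) := by linarith
      have h3 : 1/(2 * Real.sqrt ((Nat.count (· ∈ z) n : ℝ) + 1)) ≤ 1/2 := by
        rw [div_le_div_iff₀ (by linarith) (by norm_num)]
        linarith
      have h4 : 0 < 1/(2 * Real.sqrt ((Nat.count (· ∈ z) n : ℝ) + 1)) := by positivity
      constructor <;> linarith
    · norm_num
  have hne : (∑' n : ℕ, ENNReal.ofReal ((alphaSeq (dotOp g x) n - alphaSeq x n)^2)) ≠ ⊤ := by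
    rw [tsum_diff_eq hg hx]
    exact hρ.ne
  have hsum : Summable (fun n => (alphaSeq (dotOp g x) n - alphaSeq x n)^2) := by
    have h := ENNReal.summable_toReal hne
    refine h.congr fun n => ?_
    rw [ENNReal.toReal_ofReal (sq_nonneg _)]
  constructor
  · exact kakutani_ac (alphaSeq x) (alphaSeq (dotOp g x)) (halpha x) (halpha _) hsum
      (μ x) (μ (dotOp g x)) hcyl2 hcyl1
  · exact kakutani_ac (alphaSeq (dotOp g x)) (alphaSeq x) (halpha _) (halpha x)
      (hsum.congr fun n => by ring) (μ (dotOp g x)) (μ x) hcyl1 hcyl2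

end
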